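/- For all positive reals a, b, all p ∈ [0,1], q ∈ (0,1), and any nonzero real α: max{p/q, (1-p)/(1-q)} · [(1-q)a^α + q b^α − (a^(1-q) b^q)^α] ≥ (1-p)a^α + p b^α − (a^(1-p) b^p)^α ≥ min{p/q, (1-p)/(1-q)} · [(1-q)a^α + q b^α − (a^(1-q) b^q)^α]. -/

import Mathlib

/-- Key lemma: for a convex function on ℝ and `p ≤ q`, the Jensen gap at `p`
is between `(p/q)` and `((1-p)/(1-q))` times the Jensen gap at `q`. -/
lemma jensen_gap_key (f : ℝ → ℝ) (hf : ConvexOn ℝ Set.univ f) (x y p q : ℝ)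
    (hp0 : 0 ≤ p) (hq0 : 0 < q) (hq1 : q < 1) (hpq : p ≤ q) :
    (p / q) * ((1 - q) * f x + q * f y - f ((1 - q) * x + q * y)) ≤
      (1 - p) * f x + p * f y - f ((1 - p) * x + p * y) ∧
    (1 - p) * f x + p * f y - f ((1 - p) * x + p * y) ≤
      ((1 - p) / (1 - q)) * ((1 - q) * f x + q * f y - f ((1 - q) * x + q * y)) := by
  set r := p / q with hrdef
  have hr : r * q = p := div_mul_cancel₀ p hq0.ne'
  have hr0 : 0 ≤ r := div_nonneg hp0 hq0.le
  have hr1 : r ≤ 1 := (div_le_one hq0).2 hpq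
  have h1q : (0:ℝ) < 1 - q := by linarith
  have h1p : (0:ℝ) < 1 - p := by linarith
  set l := (1 - q) / (1 - p) with hldef
  set s := (1 - p) / (1 - q) with hsdef
  have hl : l * (1 - p) = 1 - q := div_mul_cancel₀ _ h1p.ne'
  have hs : s * (1 - q) = 1 - p := div_mul_cancel₀ _ h1q.ne'
  have hsl : s * l = 1 := by
    rw [hsdef, hldef, div_mul_div_comm, mul_comm (1 - p), div_self (mul_ne_zero h1q.ne' h1p.ne')]
  have hl0 : 0 ≤ l := div_nonneg h1q.le h1p.le
  have hl1 : l ≤ 1 := (div_le_one h1p).2 (by linarith)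
  have hs0 : 0 ≤ s := div_nonneg h1p.le h1q.le
  -- first convexity application
  have hc1 := hf.2 (Set.mem_univ x) (Set.mem_univ ((1 - q) * x + q * y))
    (by linarith : (0:ℝ) ≤ 1 - r) hr0 (by ring)
  have hc2 := hf.2 (Set.mem_univ ((1 - p) * x + p * y)) (Set.mem_univ y)
    hl0 (by linarith : (0:ℝ) ≤ 1 - l) (by ring)
  simp only [smul_eq_mul] at hc1 hc2
  have e1 : (1 - r) * x + r * ((1 - q) * x + q * y) = (1 - p) * x + p * y := by
    linear_combination (y - x) * hr
  rw [e1] at hc1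
  have e2 : l * ((1 - p) * x + p * y) + (1 - l) * y = (1 - q) * x + q * y := by
    linear_combination (x - y) * hl
  rw [e2] at hc2
  constructor
  · have ha1 : r * q * f x = p * f x := by rw [hr]
    have ha2 : r * q * f y = p * f y := by rw [hr]
    nlinarith [hc1, ha1, ha2]
  · have h2 := mul_le_mul_of_nonneg_left hc2 hs0
    have hb1 : s * l * f ((1 - p) * x + p * y) = f ((1 - p) * x + p * y) := by
      rw [hsl, one_mul]
    have hb2 : s * l * f y = f y := by rw [hsl, one_mul]
    have hb3 : s * f x - s * q * f x = (1 - p) * f x := by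
      linear_combination (f x) * hs
    have hb4 : s * q * f y - s * f y + f y - p * f y = 0 := by
      linear_combination (-(f y)) * hs
    nlinarith [h2, hb1, hb2, hb3, hb4]

theorem stmt_5 (a b p q α : ℝ) (ha : 0 < a) (hb : 0 < b)
    (hp : p ∈ Set.Icc (0:ℝ) 1) (hq : q ∈ Set.Ioo (0:ℝ) 1) (hα : α ≠ 0) :
    max (p / q) ((1 - p) / (1 - q)) *
        ((1 - q) * a ^ α + q * b ^ α - (a ^ (1 - q) * b ^ q) ^ α) ≥
      (1 - p) * a ^ α + p * b ^ α - (a ^ (1 - p) * b ^ p) ^ α ∧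
    (1 - p) * a ^ α + p * b ^ α - (a ^ (1 - p) * b ^ p) ^ α ≥
      min (p / q) ((1 - p) / (1 - q)) *
        ((1 - q) * a ^ α + q * b ^ α - (a ^ (1 - q) * b ^ q) ^ α) := by
  obtain ⟨hp0, hp1⟩ := hp
  obtain ⟨hq0, hq1⟩ := hq
  set x := α * Real.log a with hx
  set y := α * Real.log b with hy
  have hax : a ^ α = Real.exp x := by
    rw [Real.rpow_def_of_pos ha, hx, mul_comm]
  have hby : b ^ α = Real.exp y := by
    rw [Real.rpow_def_of_pos hb, hy, mul_comm]
  have hgeo : ∀ t : ℝ, (a ^ (1 - t) * b ^ t) ^ α = Real.exp ((1 - t) * x + t * y) := by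
    intro t
    have hpos : 0 < a ^ (1 - t) * b ^ t :=
      mul_pos (Real.rpow_pos_of_pos ha _) (Real.rpow_pos_of_pos hb _)
    rw [Real.rpow_def_of_pos hpos, Real.log_mul (Real.rpow_pos_of_pos ha _).ne'
      (Real.rpow_pos_of_pos hb _).ne', Real.log_rpow ha, Real.log_rpow hb]
    congr 1
    simp only [hx, hy]; ring
  rw [hax, hby, hgeo, hgeo]
  have hexp : ConvexOn ℝ Set.univ Real.exp := convexOn_exp
  rcases le_total p q with hpq | hqp
  · have hkey := jensen_gap_key Real.exp hexp x y p q hp0 hq0 hq1 hpq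
    have hmax : max (p / q) ((1 - p) / (1 - q)) = (1 - p) / (1 - q) := by
      apply max_eq_right
      calc p / q ≤ 1 := (div_le_one hq0).2 hpq
        _ ≤ (1 - p) / (1 - q) := (one_le_div (by linarith)).2 (by linarith)
    have hmin : min (p / q) ((1 - p) / (1 - q)) = p / q := by
      apply min_eq_left
      calc p / q ≤ 1 := (div_le_one hq0).2 hpq
        _ ≤ (1 - p) / (1 - q) := (one_le_div (by linarith)).2 (by linarith)
    rw [hmax, hmin]
    exact ⟨hkey.2, hkey.1⟩
  · have hkey := jensen_gap_key Real.exp hexp y x (1 - p) (1 - q)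
      (by linarith) (by linarith) (by linarith) (by linarith)
    have e1 : (1 - (1 - q)) * y + (1 - q) * x = (1 - q) * x + q * y := by ring
    have e2 : (1 - (1 - p)) * y + (1 - p) * x = (1 - p) * x + p * y := by ring
    rw [e1, e2] at hkey
    have e3 : (1 - (1 - p)) / (1 - (1 - q)) = p / q := by norm_num
    rw [e3] at hkey
    have hmax : max (p / q) ((1 - p) / (1 - q)) = p / q := by
      apply max_eq_left
      calc (1 - p) / (1 - q) ≤ 1 := (div_le_one (by linarith)).2 (by linarith)
        _ ≤ p / q := (one_le_div hq0).2 hqp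
    have hmin : min (p / q) ((1 - p) / (1 - q)) = (1 - p) / (1 - q) := by
      apply min_eq_right
      calc (1 - p) / (1 - q) ≤ 1 := (div_le_one (by linarith)).2 (by linarith)
        _ ≤ p / q := (one_le_div hq0).2 hqp
    rw [hmax, hmin]
    constructor
    · have := hkey.2
      linarith [hkey.2]
    · linarith [hkey.1]
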